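/- Constantin–E–Titi commutator identity: for f, g ∈ L²(Ω) and x at distance greater than ℓ from ∂Ω, the coarse-graining cumulant τ_ℓ(f,g)(x) := (f⊗g)̄_ℓ(x) − f̄_ℓ(x) ⊗ ḡ_ℓ(x) satisfies τ_ℓ(f,g)(x) = ∫ G_ℓ(r) δf(r;x) ⊗ δg(r;x) dr − (∫ G_ℓ(r) δf(r;x) dr) ⊗ (∫ G_ℓ(r) δg(r;x) dr), where δf(r;x) = f(x+r) − f(x). -/

import Mathlib

open MeasureTheory Metric Set

noncomputable section

/-- Constantin–E–Titi commutator identity (componentwise): for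
`f, g ∈ L²(Ω)` and `x` at distance greater than `ℓ` from `∂Ω`, the coarse-graining
cumulant `τ_ℓ(f,g)(x) = (f⊗g)̄_ℓ(x) − f̄_ℓ(x) ⊗ ḡ_ℓ(x)` satisfies
`τ_ℓ(f,g)(x) = ∫ G_ℓ(r) δf(r;x) ⊗ δg(r;x) dr
  − (∫ G_ℓ(r) δf(r;x) dr) ⊗ (∫ G_ℓ(r) δg(r;x) dr)`,
where `δf(r;x) = f(x+r) − f(x)`; the `(i,j)` tensor component is stated. -/
theorem stmt_1 {d : ℕ} (ℓ : ℝ) (hℓ : 0 < ℓ)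
    (Ω : Set (EuclideanSpace ℝ (Fin d))) (hΩ : IsOpen Ω)
    (Gℓ : EuclideanSpace ℝ (Fin d) → ℝ)
    (hG0 : ∀ r, 0 ≤ Gℓ r)
    (hGsupp : ∀ r, Gℓ r ≠ 0 → ‖r‖ ≤ ℓ)
    (hGmass : ∫ r, Gℓ r = 1)
    (hGint : Integrable Gℓ)
    (f g : EuclideanSpace ℝ (Fin d) → EuclideanSpace ℝ (Fin d))
    (hf : MemLp f 2 (volume.restrict Ω)) (hg : MemLp g 2 (volume.restrict Ω))
    (x : EuclideanSpace ℝ (Fin d)) (hx : x ∈ Ω)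
    (hdist : ℓ < infDist x (frontier Ω))
    (i j : Fin d)
    (hint2 : Integrable (fun r => Gℓ r * (f (x + r) i * g (x + r) j)))
    (hintf : Integrable (fun r => Gℓ r * f (x + r) i))
    (hintg : Integrable (fun r => Gℓ r * g (x + r) j)) :
    (∫ r, Gℓ r * (f (x + r) i * g (x + r) j))
        - (∫ r, Gℓ r * f (x + r) i) * (∫ r, Gℓ r * g (x + r) j)
      = (∫ r, Gℓ r * ((f (x + r) i - f x i) * (g (x + r) j - g x j)))
        - (∫ r, Gℓ r * (f (x + r) i - f x i)) * (∫ r, Gℓ r * (g (x + r) j - g x j)) := by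
  have hA : Integrable (fun r => f x i * (Gℓ r * g (x + r) j)) := hintg.const_mul _
  have hB : Integrable (fun r => g x j * (Gℓ r * f (x + r) i)) := hintf.const_mul _
  have hC : Integrable (fun r => (f x i * g x j) * Gℓ r) := hGint.const_mul _
  have hfx : Integrable (fun r => f x i * Gℓ r) := hGint.const_mul _
  have hgx : Integrable (fun r => g x j * Gℓ r) := hGint.const_mul _
  have e1 : (fun r => Gℓ r * ((f (x + r) i - f x i) * (g (x + r) j - g x j)))
      = fun r => (Gℓ r * (f (x + r) i * g (x + r) j) - f x i * (Gℓ r * g (x + r) j))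
        - (g x j * (Gℓ r * f (x + r) i) - (f x i * g x j) * Gℓ r) := by
    funext r; ring
  have e2 : (fun r => Gℓ r * (f (x + r) i - f x i))
      = fun r => Gℓ r * f (x + r) i - f x i * Gℓ r := by funext r; ring
  have e3 : (fun r => Gℓ r * (g (x + r) j - g x j))
      = fun r => Gℓ r * g (x + r) j - g x j * Gℓ r := by funext r; ring
  have I1 := integral_sub (hint2.sub hA) (hB.sub hC)
  simp only [Pi.sub_apply] at I1
  rw [e1, e2, e3, I1, integral_sub hint2 hA, integral_sub hB hC, integral_sub hintf hfx,
    integral_sub hintg hgx, integral_const_mul, integral_const_mul, integral_const_mul,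
    integral_const_mul, integral_const_mul, hGmass]
  ring
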